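/- Let G be a balanced complex orthogonal design (BCOD) with p rows, in B_i form for some i. Then the p rows of G can be partitioned into p/2 pairs; in particular every row of G belongs to a pair. -/

import Mathlib

open Matrix

/-- A formal entry of a complex orthogonal design: either `0`, or `± z_i`, or `± z_i^*`.
Here `sign = true` means sign `+1`, and `conj = true` means the conjugated symbol `z_i^*`. -/
inductive CODEntry (k : ℕ) : Type where
  | zero : CODEntry k
  | var (sign : Bool) (conj : Bool) (idx : Fin k) : CODEntry k
deriving DecidableEq

namespace CODEntry

variable {k k' : ℕ}

/-- Evaluate a formal entry at an assignment of complex values to the indeterminates. -/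
def eval (z : Fin k → ℂ) : CODEntry k → ℂ
  | zero => 0
  | var s c i => (if s then (1 : ℂ) else -1) * (if c then (starRingEnd ℂ) (z i) else z i)

/-- Formal negation of an entry. -/
def neg : CODEntry k → CODEntry k
  | zero => zero
  | var s c i => var (!s) c i

/-- Formal conjugation of an entry (with `0^* = 0`). -/
def conj : CODEntry k → CODEntry k
  | zero => zero
  | var s c i => var s (!c) i

/-- Optionally negate an entry. -/
def negIf (b : Bool) (e : CODEntry k) : CODEntry k := if b then e.neg else e

/-- Rename variables according to a permutation of the indices. -/
def rename (σ : Equiv.Perm (Fin k)) : CODEntry k → CODEntry k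
  | zero => zero
  | var s c i => var s c (σ i)

/-- Negate all instances of the variable `z_j`. -/
def negVar (j : Fin k) : CODEntry k → CODEntry k
  | zero => zero
  | var s c i => if i = j then var (!s) c i else var s c i

/-- Conjugate all instances of the variable `z_j` (swap `z_j ↔ z_j^*`). -/
def conjVar (j : Fin k) : CODEntry k → CODEntry k
  | zero => zero
  | var s c i => if i = j then var s (!c) i else var s c i

/-- Transport an entry along a map of variable index sets. -/
def mapIdx (f : Fin k → Fin k') : CODEntry k → CODEntry k'
  | zero => zero
  | var s c i => var s c (f i)

/-- Whether a (nonzero) entry is a conjugated symbol `± z_i^*`. -/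
def isConj : CODEntry k → Bool
  | zero => false
  | var _ c _ => c

/-- The index of the variable occurring in an entry, if any. -/
def index : CODEntry k → Option (Fin k)
  | zero => none
  | var _ _ i => some i

end CODEntry

/-- `G` is a `[p, n, k]` complex orthogonal design (COD): for every assignment of complex
values to the indeterminates, `Gᴴ * G = (|z_1|² + … + |z_k|²) • I_n`. -/
def IsCOD {p n k : ℕ} (G : Matrix (Fin p) (Fin n) (CODEntry k)) : Prop :=
  ∀ z : Fin k → ℂ,
    (G.map (CODEntry.eval z))ᴴ * (G.map (CODEntry.eval z)) =
      ((∑ i, Complex.normSq (z i) : ℝ) : ℂ) • (1 : Matrix (Fin n) (Fin n) ℂ)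

/-- The equivalence operations on `[p, n, k]` CODs. -/
inductive EquivOp (p n k : ℕ) : Type where
  | rowPerm (σ : Equiv.Perm (Fin p))
  | rowNeg (r : Fin p)
  | colPerm (σ : Equiv.Perm (Fin n))
  | colNeg (c : Fin n)
  | varRename (σ : Equiv.Perm (Fin k))
  | varNeg (i : Fin k)
  | varConj (i : Fin k)

namespace EquivOp

variable {p n k : ℕ}

/-- Apply an equivalence operation to a matrix of formal entries. -/
def apply (G : Matrix (Fin p) (Fin n) (CODEntry k)) :
    EquivOp p n k → Matrix (Fin p) (Fin n) (CODEntry k)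
  | rowPerm σ => fun r c => G (σ r) c
  | rowNeg r₀ => fun r c => if r = r₀ then (G r c).neg else G r c
  | colPerm σ => fun r c => G r (σ c)
  | colNeg c₀ => fun r c => if c = c₀ then (G r c).neg else G r c
  | varRename σ => fun r c => (G r c).rename σ
  | varNeg i => fun r c => (G r c).negVar i
  | varConj i => fun r c => (G r c).conjVar i

/-- The operation is a column permutation. -/
def IsColPerm : EquivOp p n k → Prop
  | colPerm _ => True
  | _ => False

/-- The operation is a column negation. -/
def IsColNeg : EquivOp p n k → Prop
  | colNeg _ => True
  | _ => False

/-- The operation is a variable renaming. -/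
def IsVarRename : EquivOp p n k → Prop
  | varRename _ => True
  | _ => False

/-- Where each row of the original matrix is sent by the operation. -/
def rowMap : EquivOp p n k → Equiv.Perm (Fin p)
  | rowPerm σ => σ⁻¹
  | _ => 1

end EquivOp

/-- Apply a finite sequence of equivalence operations, in order. -/
def applyOps {p n k : ℕ} (G : Matrix (Fin p) (Fin n) (CODEntry k))
    (ops : List (EquivOp p n k)) : Matrix (Fin p) (Fin n) (CODEntry k) :=
  ops.foldl EquivOp.apply G

/-- Where each row of the original matrix is sent by a sequence of operations. -/
def opsRowMap {p n k : ℕ} (ops : List (EquivOp p n k)) : Equiv.Perm (Fin p) :=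
  ops.foldl (fun τ op => op.rowMap * τ) 1

/-- An operation on a COD with `m + m` columns is column-restricted if, in case it is a
column permutation, it is the transposition of columns `i` and `m + i` for some `i`. -/
def EquivOp.ColumnRestricted {p m k : ℕ} : EquivOp p (m + m) k → Prop
  | .colPerm σ => ∃ i : Fin m, σ = Equiv.swap (Fin.castAdd m i) (Fin.natAdd m i)
  | _ => True

/-- `G` contains the `B_i` form submatrix on the `2m` rows selected by the embedding `f`:
the block matrix `((z_i I_m, M), (−Mᴴ, z_i^* I_m))` where `M` is the top-right block. -/
def ContainsBFormWith {p m k : ℕ} (G : Matrix (Fin p) (Fin (m + m)) (CODEntry k))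
    (i : Fin k) (f : Fin (m + m) ↪ Fin p) : Prop :=
  (∀ r s : Fin m, G (f (Fin.castAdd m r)) (Fin.castAdd m s) =
      if r = s then CODEntry.var true false i else CODEntry.zero) ∧
  (∀ r s : Fin m, G (f (Fin.natAdd m r)) (Fin.natAdd m s) =
      if r = s then CODEntry.var true true i else CODEntry.zero) ∧
  (∀ r s : Fin m, G (f (Fin.natAdd m r)) (Fin.castAdd m s) =
      ((G (f (Fin.castAdd m s)) (Fin.natAdd m r)).conj).neg)

/-- As `ContainsBFormWith`, and moreover the top-right block `M` is (formally)
skew-symmetric: `Mᵀ = −M`. -/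
def ContainsSkewBFormWith {p m k : ℕ} (G : Matrix (Fin p) (Fin (m + m)) (CODEntry k))
    (i : Fin k) (f : Fin (m + m) ↪ Fin p) : Prop :=
  ContainsBFormWith G i f ∧
  ∀ r s : Fin m, G (f (Fin.castAdd m s)) (Fin.natAdd m r) =
    (G (f (Fin.castAdd m r)) (Fin.natAdd m s)).neg

/-- `G` is in `B_i` form: after equivalence operations excluding column permutations
(and not renaming variables), it contains the `B_i` form submatrix. -/
def InBForm {p m k : ℕ} (G : Matrix (Fin p) (Fin (m + m)) (CODEntry k)) (i : Fin k) : Prop :=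
  ∃ ops : List (EquivOp p (m + m) k),
    (∀ op ∈ ops, ¬ op.IsColPerm ∧ ¬ op.IsVarRename) ∧
    ∃ f, ContainsBFormWith (applyOps G ops) i f

/-- `G` is in `B_i` form with skew-symmetric block `M_i`. -/
def InSkewBForm {p m k : ℕ} (G : Matrix (Fin p) (Fin (m + m)) (CODEntry k)) (i : Fin k) : Prop :=
  ∃ ops : List (EquivOp p (m + m) k),
    (∀ op ∈ ops, ¬ op.IsColPerm ∧ ¬ op.IsVarRename) ∧
    ∃ f, ContainsSkewBFormWith (applyOps G ops) i f

/-- `G` is a balanced complex orthogonal design (BCOD) with `2m` columns: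
a COD in which every row has exactly `m` zero entries (hence `m` nonzero ones),
every row is conjugation-separated, and for each variable `z_j` it is in `B_j` form
with skew-symmetric block `M_j`. -/
def IsBCOD {p m k : ℕ} (G : Matrix (Fin p) (Fin (m + m)) (CODEntry k)) : Prop :=
  IsCOD G ∧
  (∀ r : Fin p, (Finset.univ.filter fun c => G r c = CODEntry.zero).card = m) ∧
  (∀ r : Fin p,
      (∀ c, G r c ≠ CODEntry.zero → (G r c).isConj = true) ∨
      (∀ c, G r c ≠ CODEntry.zero → (G r c).isConj = false)) ∧
  (∀ j : Fin k, InSkewBForm G j)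

/-- `G` is the direct sum of `G₁` (on top) and `G₂` (below), where `G₁` and `G₂` use
disjoint sets of indeterminates, embedded into `Fin k` via `ι₁` and `ι₂`. -/
def IsDirectSumOf {p n k p₁ p₂ k₁ k₂ : ℕ} (hp : p = p₁ + p₂)
    (G : Matrix (Fin p) (Fin n) (CODEntry k))
    (G₁ : Matrix (Fin p₁) (Fin n) (CODEntry k₁))
    (G₂ : Matrix (Fin p₂) (Fin n) (CODEntry k₂))
    (ι₁ : Fin k₁ ↪ Fin k) (ι₂ : Fin k₂ ↪ Fin k) : Prop :=
  k = k₁ + k₂ ∧ (∀ a b, ι₁ a ≠ ι₂ b) ∧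
  ∀ (r : Fin p) (c : Fin n),
    if h : (r : ℕ) < p₁ then G r c = (G₁ ⟨(r : ℕ), h⟩ c).mapIdx (fun i => ι₁ i)
    else G r c = (G₂ ⟨(r : ℕ) - p₁, by have := r.isLt; omega⟩ c).mapIdx (fun i => ι₂ i)

/-- A COD is decomposable if, after a permutation of its rows, it can be expressed as
the direct sum of two (nonempty) CODs on disjoint sets of indeterminates. -/
def IsDecomposable {p n k : ℕ} (G : Matrix (Fin p) (Fin n) (CODEntry k)) : Prop :=
  ∃ (σ : Equiv.Perm (Fin p)) (p₁ p₂ k₁ k₂ : ℕ) (hp : p = p₁ + p₂)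
    (G₁ : Matrix (Fin p₁) (Fin n) (CODEntry k₁))
    (G₂ : Matrix (Fin p₂) (Fin n) (CODEntry k₂))
    (ι₁ : Fin k₁ ↪ Fin k) (ι₂ : Fin k₂ ↪ Fin k),
    0 < p₁ ∧ 0 < p₂ ∧ IsCOD G₁ ∧ IsCOD G₂ ∧
    IsDirectSumOf hp (fun r c => G (σ r) c) G₁ G₂ ι₁ ι₂

/-- Rows `r₁` and `r₂` of `G` form a pair: if `r₁` is `(α₁,…,α_m, β₁,…,β_m)` then `r₂`
is `(±β₁^*,…,±β_m^*, ±α₁^*,…,±α_m^*)` (the signs may differ from entry to entry). -/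
def IsPairRows {p m k : ℕ} (G : Matrix (Fin p) (Fin (m + m)) (CODEntry k))
    (r₁ r₂ : Fin p) : Prop :=
  ∀ s : Fin m,
    (∃ b : Bool, G r₂ (Fin.castAdd m s) = CODEntry.negIf b ((G r₁ (Fin.natAdd m s)).conj)) ∧
    (∃ b : Bool, G r₂ (Fin.natAdd m s) = CODEntry.negIf b ((G r₁ (Fin.castAdd m s)).conj))

namespace CODEntry

variable {k : ℕ}

@[simp] lemma neg_neg' (x : CODEntry k) : x.neg.neg = x := by cases x <;> simp [neg]

@[simp] lemma conj_conj' (x : CODEntry k) : x.conj.conj = x := by cases x <;> simp [conj]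

lemma conj_neg' (x : CODEntry k) : x.neg.conj = x.conj.neg := by cases x <;> simp [neg, conj]

@[simp] lemma negIf_false (x : CODEntry k) : negIf false x = x := rfl

@[simp] lemma negIf_negIf (a b : Bool) (x : CODEntry k) :
    negIf a (negIf b x) = negIf (xor a b) x := by
  cases a <;> cases b <;> simp [negIf]

lemma conj_negIf (b : Bool) (x : CODEntry k) : (negIf b x).conj = negIf b x.conj := by
  cases b <;> simp [negIf, conj_neg']

lemma negIf_eq_iff {b : Bool} {x y : CODEntry k} : negIf b x = y ↔ x = negIf b y := by
  cases b <;> simp [negIf]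
  constructor <;> (rintro rfl; simp)

@[simp] lemma index_neg (x : CODEntry k) : x.neg.index = x.index := by
  cases x <;> simp [neg, index]

@[simp] lemma index_conj (x : CODEntry k) : x.conj.index = x.index := by
  cases x <;> simp [conj, index]

@[simp] lemma index_negIf (b : Bool) (x : CODEntry k) : (negIf b x).index = x.index := by
  cases b <;> simp [negIf]

lemma negVar_neg (j : Fin k) (x : CODEntry k) : (x.neg).negVar j = (x.negVar j).neg := by
  cases x with
  | zero => rfl
  | var s c i => by_cases h : i = j <;> simp [neg, negVar, h]

lemma negVar_conj (j : Fin k) (x : CODEntry k) : (x.conj).negVar j = (x.negVar j).conj := by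
  cases x with
  | zero => rfl
  | var s c i => by_cases h : i = j <;> simp [conj, negVar, h]

lemma negVar_invol (j : Fin k) : Function.Involutive (negVar (k := k) j) := by
  intro x
  cases x with
  | zero => rfl
  | var s c i => by_cases h : i = j <;> simp [negVar, h]

@[simp] lemma index_negVar (j : Fin k) (x : CODEntry k) : (x.negVar j).index = x.index := by
  cases x with
  | zero => rfl
  | var s c i => by_cases h : i = j <;> simp [negVar, index, h]

lemma conjVar_neg (j : Fin k) (x : CODEntry k) : (x.neg).conjVar j = (x.conjVar j).neg := by
  cases x with
  | zero => rfl
  | var s c i => by_cases h : i = j <;> simp [neg, conjVar, h]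

lemma conjVar_conj (j : Fin k) (x : CODEntry k) : (x.conj).conjVar j = (x.conjVar j).conj := by
  cases x with
  | zero => rfl
  | var s c i => by_cases h : i = j <;> simp [conj, conjVar, h]

lemma conjVar_invol (j : Fin k) : Function.Involutive (conjVar (k := k) j) := by
  intro x
  cases x with
  | zero => rfl
  | var s c i => by_cases h : i = j <;> simp [conjVar, h]

@[simp] lemma index_conjVar (j : Fin k) (x : CODEntry k) : (x.conjVar j).index = x.index := by
  cases x with
  | zero => rfl
  | var s c i => by_cases h : i = j <;> simp [conjVar, index, h]

end CODEntry

lemma isPairRows_symm {p m k : ℕ} {G : Matrix (Fin p) (Fin (m + m)) (CODEntry k)}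
    {r₁ r₂ : Fin p} (h : IsPairRows G r₁ r₂) : IsPairRows G r₂ r₁ := by
  intro s
  obtain ⟨⟨b₁, e₁⟩, ⟨b₂, e₂⟩⟩ := h s
  refine ⟨⟨b₂, ?_⟩, ⟨b₁, ?_⟩⟩
  · rw [e₂, CODEntry.conj_negIf, CODEntry.conj_conj', CODEntry.negIf_negIf, Bool.xor_self,
      CODEntry.negIf_false]
  · rw [e₁, CODEntry.conj_negIf, CODEntry.conj_conj', CODEntry.negIf_negIf, Bool.xor_self,
      CODEntry.negIf_false]

lemma isPairRows_of_negIf {p m k : ℕ} {G G' : Matrix (Fin p) (Fin (m + m)) (CODEntry k)}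
    (h : ∀ r c, ∃ b, G' r c = CODEntry.negIf b (G r c)) {r₁ r₂ : Fin p}
    (hp : IsPairRows G' r₁ r₂) : IsPairRows G r₁ r₂ := by
  intro s
  obtain ⟨⟨b₁, e₁⟩, ⟨b₂, e₂⟩⟩ := hp s
  obtain ⟨a1, h1⟩ := h r₂ (Fin.castAdd m s)
  obtain ⟨a2, h2⟩ := h r₁ (Fin.natAdd m s)
  obtain ⟨a3, h3⟩ := h r₂ (Fin.natAdd m s)
  obtain ⟨a4, h4⟩ := h r₁ (Fin.castAdd m s)
  constructor
  · rw [h1, h2, CODEntry.conj_negIf, CODEntry.negIf_negIf, CODEntry.negIf_eq_iff,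
      CODEntry.negIf_negIf] at e₁
    exact ⟨_, e₁⟩
  · rw [h3, h4, CODEntry.conj_negIf, CODEntry.negIf_negIf, CODEntry.negIf_eq_iff,
      CODEntry.negIf_negIf] at e₂
    exact ⟨_, e₂⟩

lemma isPairRows_of_map {p m k : ℕ} {G : Matrix (Fin p) (Fin (m + m)) (CODEntry k)}
    (φ : CODEntry k → CODEntry k) (hinj : Function.Injective φ)
    (hneg : ∀ x, φ x.neg = (φ x).neg) (hconj : ∀ x, φ x.conj = (φ x).conj) {r₁ r₂ : Fin p}
    (hp : IsPairRows (fun r c => φ (G r c)) r₁ r₂) : IsPairRows G r₁ r₂ := by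
  have hnegIf : ∀ b x, φ (CODEntry.negIf b x) = CODEntry.negIf b (φ x) := by
    intro b x; cases b <;> simp [CODEntry.negIf, hneg]
  intro s
  obtain ⟨⟨b₁, e₁⟩, ⟨b₂, e₂⟩⟩ := hp s
  exact ⟨⟨b₁, hinj (by rw [hnegIf, hconj]; exact e₁)⟩, ⟨b₂, hinj (by rw [hnegIf, hconj]; exact e₂)⟩⟩

/-- Transfer lemma: a sequence of allowed operations moves rows by a permutation `τ`,
preserves the variable occupying each cell, and reflects the pairing relation. -/
lemma transfer_ops {p m k : ℕ} (ops : List (EquivOp p (m + m) k)) :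
    (∀ op ∈ ops, ¬ op.IsColPerm ∧ ¬ op.IsVarRename) →
    ∀ G : Matrix (Fin p) (Fin (m + m)) (CODEntry k),
    ∃ τ : Equiv.Perm (Fin p),
      (∀ r c, ((applyOps G ops) (τ r) c).index = (G r c).index) ∧
      (∀ r₁ r₂, IsPairRows (applyOps G ops) (τ r₁) (τ r₂) → IsPairRows G r₁ r₂) := by
  induction ops with
  | nil => exact fun _ G => ⟨1, fun r c => rfl, fun r₁ r₂ h => h⟩
  | cons op ops ih =>
    intro hops G
    have hop := hops op List.mem_cons_self
    obtain ⟨τ', h1, h2⟩ := ih (fun op' h => hops op' (List.mem_cons_of_mem _ h)) (op.apply G)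
    cases op with
    | rowPerm σ =>
      refine ⟨(σ⁻¹ : Equiv.Perm (Fin p)).trans τ', fun r c => ?_, fun r₁ r₂ h => ?_⟩
      · refine (h1 (σ⁻¹ r) c).trans ?_
        show (G (σ (σ⁻¹ r)) c).index = (G r c).index
        rw [← Equiv.Perm.mul_apply, mul_inv_cancel, Equiv.Perm.one_apply]
      · have h' := h2 (σ⁻¹ r₁) (σ⁻¹ r₂) h
        have h'' : IsPairRows G (σ (σ⁻¹ r₁)) (σ (σ⁻¹ r₂)) := fun s => h' s
        simpa using h''
    | rowNeg r₀ =>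
      refine ⟨τ', fun r c => ?_, fun r₁ r₂ h => ?_⟩
      · refine (h1 r c).trans ?_
        show ((if r = r₀ then (G r c).neg else G r c)).index = (G r c).index
        split <;> simp
      · refine isPairRows_of_negIf (G := G) (G' := EquivOp.apply G (.rowNeg r₀))
          (fun r c => ?_) (h2 r₁ r₂ h)
        by_cases hr : r = r₀
        · exact ⟨true, by simp [EquivOp.apply, hr, CODEntry.negIf]⟩
        · exact ⟨false, by simp [EquivOp.apply, hr, CODEntry.negIf]⟩
    | colPerm σ => exact absurd trivial hop.1
    | colNeg c₀ =>
      refine ⟨τ', fun r c => ?_, fun r₁ r₂ h => ?_⟩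
      · refine (h1 r c).trans ?_
        show ((if c = c₀ then (G r c).neg else G r c)).index = (G r c).index
        split <;> simp
      · refine isPairRows_of_negIf (G := G) (G' := EquivOp.apply G (.colNeg c₀))
          (fun r c => ?_) (h2 r₁ r₂ h)
        by_cases hc : c = c₀
        · exact ⟨true, by simp [EquivOp.apply, hc, CODEntry.negIf]⟩
        · exact ⟨false, by simp [EquivOp.apply, hc, CODEntry.negIf]⟩
    | varRename σ => exact absurd trivial hop.2
    | varNeg j =>
      refine ⟨τ', fun r c => ?_, fun r₁ r₂ h => ?_⟩
      · exact (h1 r c).trans (CODEntry.index_negVar j (G r c))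
      · exact isPairRows_of_map (CODEntry.negVar j) (CODEntry.negVar_invol j).injective
          (CODEntry.negVar_neg j) (CODEntry.negVar_conj j) (h2 r₁ r₂ h)
    | varConj j =>
      refine ⟨τ', fun r c => ?_, fun r₁ r₂ h => ?_⟩
      · exact (h1 r c).trans (CODEntry.index_conjVar j (G r c))
      · exact isPairRows_of_map (CODEntry.conjVar j) (CODEntry.conjVar_invol j).injective
          (CODEntry.conjVar_neg j) (CODEntry.conjVar_conj j) (h2 r₁ r₂ h)

/-- In a COD, every variable occurs exactly once in every column. -/
lemma cod_col_once {p n k : ℕ} {G : Matrix (Fin p) (Fin n) (CODEntry k)} (hG : IsCOD G)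
    (c : Fin n) (a : Fin k) : ∃! r, (G r c).index = some a := by
  classical
  set z : Fin k → ℂ := fun j => if j = a then 1 else 0 with hzdef
  have h := congrFun (congrFun (hG z) c) c
  rw [Matrix.mul_apply] at h
  simp only [Matrix.conjTranspose_apply, Matrix.map_apply, Matrix.smul_apply,
    Matrix.one_apply_eq, smul_eq_mul, mul_one] at h
  have key : ∀ r, star (CODEntry.eval z (G r c)) * CODEntry.eval z (G r c)
      = if (G r c).index = some a then (1 : ℂ) else 0 := by
    intro r
    cases hx : G r c with
    | zero => simp [CODEntry.eval, CODEntry.index]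
    | var s cj i =>
      by_cases hia : i = a <;>
        cases s <;> cases cj <;>
          simp [CODEntry.eval, CODEntry.index, hzdef, hia]
  rw [Finset.sum_congr rfl (fun r _ => key r)] at h
  have hsum : (∑ j, Complex.normSq (z j)) = 1 := by
    have : ∀ j, Complex.normSq (z j) = if j = a then 1 else 0 := by
      intro j; rw [hzdef]; split_ifs with hj <;> simp [hj]
    rw [Finset.sum_congr rfl (fun j _ => this j), Finset.sum_ite_eq' Finset.univ a fun _ => (1:ℝ)]
    simp
  rw [hsum, Finset.sum_boole] at h
  norm_cast at h
  obtain ⟨r₀, hr₀⟩ := Finset.card_eq_one.mp h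
  refine ⟨r₀, ?_, ?_⟩
  · have : r₀ ∈ Finset.filter (fun r => (G r c).index = some a) Finset.univ := by
      rw [hr₀]; exact Finset.mem_singleton_self r₀
    exact (Finset.mem_filter.mp this).2
  · intro r hr
    have : r ∈ Finset.filter (fun r => (G r c).index = some a) Finset.univ :=
      Finset.mem_filter.mpr ⟨Finset.mem_univ r, hr⟩
    rw [hr₀] at this
    exact Finset.mem_singleton.mp this

/-- The two diagonal rows of a skew B-form submatrix form a pair. -/
lemma bform_isPair {p m k : ℕ} {H : Matrix (Fin p) (Fin (m + m)) (CODEntry k)} {a : Fin k}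
    {f : Fin (m + m) ↪ Fin p} (hB : ContainsSkewBFormWith H a f) (s : Fin m) :
    IsPairRows H (f (Fin.castAdd m s)) (f (Fin.natAdd m s)) := by
  obtain ⟨⟨h11, h22, h21⟩, hskew⟩ := hB
  intro t
  constructor
  · refine ⟨false, ?_⟩
    rw [h21 s t, hskew s t, CODEntry.conj_neg', CODEntry.neg_neg', CODEntry.negIf_false]
  · refine ⟨false, ?_⟩
    rw [h22 s t, h11 s t, CODEntry.negIf_false]
    split_ifs <;> simp [CODEntry.conj]

/-- the `p` rows of a BCOD in `B_i` form can be partitioned into `p / 2`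
pairs (given by a fixed-point-free involution `σ` of the rows); in particular every row
belongs to a pair. -/
theorem bcod_rows_in_pairs {p m k : ℕ} (hm : 1 ≤ m)
    (G : Matrix (Fin p) (Fin (m + m)) (CODEntry k)) (hG : IsBCOD G)
    (i : Fin k) (hi : InBForm G i) :
    ∃ σ : Equiv.Perm (Fin p),
      (∀ r, σ r ≠ r) ∧ (∀ r, σ (σ r) = r) ∧ ∀ r, IsPairRows G r (σ r) := by
  classical
  obtain ⟨hCOD, hzero, hsep, hB⟩ := hG
  have colOnce : ∀ (c : Fin (m + m)) (a : Fin k), ∃! r, (G r c).index = some a :=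
    fun c a => cod_col_once hCOD c a
  -- every row contains some variable
  have hrow : ∀ r : Fin p, ∃ (c : Fin (m + m)) (a : Fin k), (G r c).index = some a := by
    intro r
    by_contra hcon
    push_neg at hcon
    have hall : ∀ c, G r c = CODEntry.zero := by
      intro c
      cases hx : G r c with
      | zero => rfl
      | var s cj j => exact absurd (by rw [hx]; rfl) (hcon c j)
    have hcard := hzero r
    rw [Finset.filter_true_of_mem (fun c _ => hall c), Finset.card_univ, Fintype.card_fin]
      at hcard
    omega
  have colCases : ∀ c : Fin (m + m),
      (∃ s : Fin m, c = Fin.castAdd m s) ∨ (∃ s : Fin m, c = Fin.natAdd m s) := by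
    intro c
    by_cases h : (c : ℕ) < m
    · exact Or.inl ⟨⟨c, h⟩, by ext; simp⟩
    · refine Or.inr ⟨⟨(c : ℕ) - m, by have := c.isLt; omega⟩, ?_⟩
      ext
      simp only [Fin.coe_natAdd]
      omega
  -- existence of a partner for every row
  have exP : ∀ r : Fin p, ∃ r', r' ≠ r ∧ IsPairRows G r r' := by
    intro r
    obtain ⟨c₀, a, ha⟩ := hrow r
    obtain ⟨ops, hops, f, hBF⟩ := hB a
    obtain ⟨τ, hidx, hpair⟩ := transfer_ops ops hops G
    set H := applyOps G ops with hH
    have colOnceH : ∀ (c : Fin (m + m)) (a' : Fin k) (r₁ r₂ : Fin p),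
        (H r₁ c).index = some a' → (H r₂ c).index = some a' → r₁ = r₂ := by
      intro c a' r₁ r₂ hh₁ hh₂
      obtain ⟨r₀, -, huniq⟩ := colOnce c a'
      have e₁ : (G (τ.symm r₁) c).index = some a' := by
        rw [← hidx (τ.symm r₁) c, Equiv.apply_symm_apply]; exact hh₁
      have e₂ : (G (τ.symm r₂) c).index = some a' := by
        rw [← hidx (τ.symm r₂) c, Equiv.apply_symm_apply]; exact hh₂
      have := (huniq _ e₁).trans (huniq _ e₂).symm
      exact τ.symm.injective this
    have hHa : (H (τ r) c₀).index = some a := by rw [hidx]; exact ha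
    have hdiag1 : ∀ s : Fin m, (H (f (Fin.castAdd m s)) (Fin.castAdd m s)).index = some a := by
      intro s; rw [hBF.1.1 s s]; simp [CODEntry.index]
    have hdiag2 : ∀ s : Fin m, (H (f (Fin.natAdd m s)) (Fin.natAdd m s)).index = some a := by
      intro s; rw [hBF.1.2.1 s s]; simp [CODEntry.index]
    have hne : ∀ s : Fin m, f (Fin.castAdd m s) ≠ f (Fin.natAdd m s) := by
      intro s hfe
      have := congrArg Fin.val (f.injective hfe)
      simp only [Fin.coe_castAdd, Fin.coe_natAdd] at this
      have := s.isLt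
      omega
    rcases colCases c₀ with ⟨s, rfl⟩ | ⟨s, rfl⟩
    · have heq : τ r = f (Fin.castAdd m s) := colOnceH _ a _ _ hHa (hdiag1 s)
      refine ⟨τ.symm (f (Fin.natAdd m s)), ?_, ?_⟩
      · intro hcon
        have : f (Fin.natAdd m s) = f (Fin.castAdd m s) := by
          rw [← heq, ← hcon, Equiv.apply_symm_apply]
        exact hne s this.symm
      · apply hpair
        rw [Equiv.apply_symm_apply, heq]
        exact bform_isPair hBF s
    · have heq : τ r = f (Fin.natAdd m s) := colOnceH _ a _ _ hHa (hdiag2 s)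
      refine ⟨τ.symm (f (Fin.castAdd m s)), ?_, ?_⟩
      · intro hcon
        have : f (Fin.castAdd m s) = f (Fin.natAdd m s) := by
          rw [← heq, ← hcon, Equiv.apply_symm_apply]
        exact hne s this
      · apply hpair
        rw [Equiv.apply_symm_apply, heq]
        exact isPairRows_symm (bform_isPair hBF s)
  -- uniqueness of the partner
  have uniq : ∀ r r₁ r₂ : Fin p, IsPairRows G r r₁ → IsPairRows G r r₂ → r₁ = r₂ := by
    intro r r₁ r₂ h₁ h₂
    obtain ⟨c₀, a, ha⟩ := hrow r
    rcases colCases c₀ with ⟨s, rfl⟩ | ⟨s, rfl⟩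
    · obtain ⟨b₁, e₁⟩ := (h₁ s).2
      obtain ⟨b₂, e₂⟩ := (h₂ s).2
      obtain ⟨r₀, -, hu⟩ := colOnce (Fin.natAdd m s) a
      have i₁ : (G r₁ (Fin.natAdd m s)).index = some a := by
        rw [e₁, CODEntry.index_negIf, CODEntry.index_conj]; exact ha
      have i₂ : (G r₂ (Fin.natAdd m s)).index = some a := by
        rw [e₂, CODEntry.index_negIf, CODEntry.index_conj]; exact ha
      exact (hu _ i₁).trans (hu _ i₂).symm
    · obtain ⟨b₁, e₁⟩ := (h₁ s).1
      obtain ⟨b₂, e₂⟩ := (h₂ s).1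
      obtain ⟨r₀, -, hu⟩ := colOnce (Fin.castAdd m s) a
      have i₁ : (G r₁ (Fin.castAdd m s)).index = some a := by
        rw [e₁, CODEntry.index_negIf, CODEntry.index_conj]; exact ha
      have i₂ : (G r₂ (Fin.castAdd m s)).index = some a := by
        rw [e₂, CODEntry.index_negIf, CODEntry.index_conj]; exact ha
      exact (hu _ i₁).trans (hu _ i₂).symm
  choose g hg1 hg2 using exP
  have hinv : Function.Involutive g := fun r =>
    uniq (g r) (g (g r)) r (hg2 (g r)) (isPairRows_symm (hg2 r))
  exact ⟨hinv.toPerm g, fun r => hg1 r, fun r => hinv r, fun r => hg2 r⟩
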